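/- Let g be a 6-dimensional real Lie algebra such that ker d ∩ g* has dimension at least 4 (equivalently, the derived algebra [g,g] has dimension at most 2). Then g admits no maximally non-integrable almost complex structure, i.e. no almost complex structure J with rk N_J = 3. -/

import Mathlib

open Matrix

noncomputable section

/-- Complexification of a real matrix. -/
def cplx {n : ℕ} (A : Matrix (Fin n) (Fin n) ℝ) : Matrix (Fin n) (Fin n) ℂ :=
  A.map Complex.ofReal

/-- The projector `(1/2)(Id + iJ)` of `V ⊗ ℂ` onto the `-i`-eigenspace `V^{0,1}` of the
complexified almost complex structure `J`. -/
def P01 {n : ℕ} (J : Matrix (Fin n) (Fin n) ℝ) : Matrix (Fin n) (Fin n) ℂ :=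
  (2⁻¹ : ℂ) • (1 + Complex.I • cplx J)

/-- The `(0,2)`-part of a complex 2-form `ω` (written as an antisymmetric matrix in the
real basis) with respect to the bigrading induced by `J`: `ω^{0,2}(x,y) = ω(P01 x, P01 y)`. -/
def proj02 {n : ℕ} (J : Matrix (Fin n) (Fin n) ℝ) (ω : Matrix (Fin n) (Fin n) ℂ) :
    Matrix (Fin n) (Fin n) ℂ :=
  (P01 J)ᵀ * ω * P01 J

/-- The Chevalley–Eilenberg differential on complex 1-forms, determined by its values
`Dd r = d e^r` on the dual basis: `d(Σ α_r e^r) = Σ α_r · (d e^r)`. -/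
def dC {n : ℕ} (Dd : Fin n → Matrix (Fin n) (Fin n) ℝ) (α : Fin n → ℂ) :
    Matrix (Fin n) (Fin n) ℂ :=
  ∑ r, α r • cplx (Dd r)

/-- The Chevalley–Eilenberg differential on real 1-forms, as a linear map. -/
def dR {n : ℕ} (Dd : Fin n → Matrix (Fin n) (Fin n) ℝ) :
    (Fin n → ℝ) →ₗ[ℝ] Matrix (Fin n) (Fin n) ℝ :=
  ∑ r, (LinearMap.proj r : (Fin n → ℝ) →ₗ[ℝ] ℝ).smulRight (Dd r)

/-- The rank of the Nijenhuis tensor of the almost complex structure `J`: the complex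
dimension of the image of `μ̄ = π^{0,2} ∘ d` on `(1,0)`-forms.  A complex covector `α` is
of type `(1,0)` iff it annihilates `V^{0,1}`, i.e. `α ∘ P01 = 0`. -/
def nijRank {n : ℕ} (Dd : Fin n → Matrix (Fin n) (Fin n) ℝ)
    (J : Matrix (Fin n) (Fin n) ℝ) : ℕ :=
  Module.finrank ℂ (Submodule.span ℂ
    {ω : Matrix (Fin n) (Fin n) ℂ |
      ∃ α : Fin n → ℂ, Matrix.vecMul α (P01 J) = 0 ∧ ω = proj02 J (dC Dd α)})

/-- The 2-form `e^a ∧ e^b`, as an antisymmetric matrix. -/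
def wR (a b : Fin 6) : Matrix (Fin 6) (Fin 6) ℝ :=
  fun p q => (if p = a ∧ q = b then 1 else 0) - (if p = b ∧ q = a then 1 else 0)

/-- The wedge product of two complex covectors, as an antisymmetric matrix. -/
def wedgeC {n : ℕ} (α β : Fin n → ℂ) : Matrix (Fin n) (Fin n) ℂ :=
  fun p q => α p * β q - α q * β p

/-- `dC` as a linear map. -/
def DmapC {n : ℕ} (Dd : Fin n → Matrix (Fin n) (Fin n) ℝ) :
    (Fin n → ℂ) →ₗ[ℂ] Matrix (Fin n) (Fin n) ℂ where
  toFun := dC Dd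
  map_add' α β := by
    simp [dC, add_smul, Finset.sum_add_distrib]
  map_smul' c α := by
    simp [dC, mul_smul, Finset.smul_sum]

/-- `μ̄ = proj02 ∘ dC` as a linear map. -/
def Lmap {n : ℕ} (Dd : Fin n → Matrix (Fin n) (Fin n) ℝ) (J : Matrix (Fin n) (Fin n) ℝ) :
    (Fin n → ℂ) →ₗ[ℂ] Matrix (Fin n) (Fin n) ℂ where
  toFun α := proj02 J (dC Dd α)
  map_add' α β := by
    have : dC Dd (α + β) = dC Dd α + dC Dd β := by
      simp [dC, add_smul, Finset.sum_add_distrib]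
    simp [proj02, this, Matrix.mul_add, Matrix.add_mul]
  map_smul' c α := by
    have : dC Dd (c • α) = c • dC Dd α := by
      simp [dC, mul_smul, Finset.smul_sum]
    simp [proj02, this, Matrix.mul_smul, Matrix.smul_mul]

lemma hJc_of {J : Matrix (Fin 6) (Fin 6) ℝ} (hJ2 : J * J = -1) :
    cplx J * cplx J = (-1 : Matrix (Fin 6) (Fin 6) ℂ) := by
  ext p q
  have h := congrFun (congrFun hJ2 p) q
  simp only [Matrix.mul_apply, Matrix.neg_apply, Matrix.one_apply, cplx, Matrix.map_apply] at h ⊢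
  have : (((∑ j, J p j * J j q : ℝ)) : ℂ) = ((- if p = q then (1:ℝ) else 0 : ℝ) : ℂ) := by
    exact_mod_cast congrArg Complex.ofReal h
  push_cast at this
  split_ifs at this ⊢ <;> simpa using this

lemma P01_idem {J : Matrix (Fin 6) (Fin 6) ℝ} (hJ2 : J * J = -1) :
    P01 J * P01 J = P01 J := by
  have hII : (Complex.I • cplx J) * (Complex.I • cplx J) = 1 := by
    rw [Matrix.smul_mul, Matrix.mul_smul, hJc_of hJ2, smul_smul, Complex.I_mul_I]
    simp
  have hAA : (1 + Complex.I • cplx J) * (1 + Complex.I • cplx J)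
      = (2:ℂ) • (1 + Complex.I • cplx J) := by
    rw [mul_add, mul_one, add_mul, one_mul, hII]
    module
  show ((2⁻¹ : ℂ) • _) * ((2⁻¹ : ℂ) • _) = _
  rw [Matrix.smul_mul, Matrix.mul_smul, hAA, smul_smul, smul_smul]
  norm_num [P01]

/-- entrywise conjugation relation: `1 - P01 J = conj (P01 J)`. -/
lemma Q_entry {J : Matrix (Fin 6) (Fin 6) ℝ} (i j : Fin 6) :
    (1 - P01 J) i j = (starRingEnd ℂ) (P01 J i j) := by
  simp only [P01, cplx, Matrix.sub_apply, Matrix.smul_apply, Matrix.add_apply,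
    Matrix.one_apply, Matrix.map_apply, smul_eq_mul, Pi.smul_apply]
  rw [_root_.map_mul, map_add, map_inv₀, _root_.map_mul]
  simp only [map_ofNat, Complex.conj_I, Complex.conj_ofReal]
  split_ifs <;> simp <;> ring

lemma ker_eq_range_aux {A B : Matrix (Fin 6) (Fin 6) ℂ} (h1 : A + B = 1) (h0 : B * A = 0) :
    LinearMap.ker A.vecMulLinear = LinearMap.range B.vecMulLinear := by
  ext α
  simp only [LinearMap.mem_ker, LinearMap.mem_range, Matrix.vecMulLinear_apply]
  constructor
  · intro h
    refine ⟨α, ?_⟩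
    have h2 := congrArg (Matrix.vecMul α) h1
    rwa [Matrix.vecMul_add, h, zero_add, Matrix.vecMul_one] at h2
  · rintro ⟨β, rfl⟩
    rw [Matrix.vecMul_vecMul, h0, Matrix.vecMul_zero]

lemma finrank_ker_P01 {J : Matrix (Fin 6) (Fin 6) ℝ} (hJ2 : J * J = -1) :
    Module.finrank ℂ (LinearMap.ker (Matrix.vecMulLinear (P01 J))) = 3 := by
  set P := P01 J with hP
  set Q : Matrix (Fin 6) (Fin 6) ℂ := 1 - P with hQ
  have hPP := P01_idem hJ2
  have hQP : Q * P = 0 := by rw [hQ, sub_mul, one_mul, hPP, sub_self]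
  have hPQ : P * Q = 0 := by rw [hQ, mul_sub, mul_one, hPP, sub_self]
  have hPaQ : P + Q = 1 := by rw [hQ]; abel
  have hQaP : Q + P = 1 := by rw [hQ]; abel
  have hker1 : LinearMap.ker P.vecMulLinear = LinearMap.range Q.vecMulLinear :=
    ker_eq_range_aux hPaQ hQP
  have hker2 : LinearMap.ker Q.vecMulLinear = LinearMap.range P.vecMulLinear :=
    ker_eq_range_aux hQaP hPQ
  have hrn : Module.finrank ℂ (LinearMap.range P.vecMulLinear)
      + Module.finrank ℂ (LinearMap.ker P.vecMulLinear) = 6 := by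
    have h := LinearMap.finrank_range_add_finrank_ker (P.vecMulLinear)
    simpa using h
  -- conjugation
  have hQe : ∀ i j, Q i j = (starRingEnd ℂ) (P i j) := fun i j => Q_entry i j
  have key1 : ∀ α : Fin 6 → ℂ, Matrix.vecMul (fun i => (starRingEnd ℂ) (α i)) Q
      = fun j => (starRingEnd ℂ) (Matrix.vecMul α P j) := by
    intro α; funext j
    simp only [Matrix.vecMul, dotProduct, map_sum, _root_.map_mul]
    exact Finset.sum_congr rfl fun i _ => by rw [hQe i j]
  have key2 : ∀ α : Fin 6 → ℂ, Matrix.vecMul (fun i => (starRingEnd ℂ) (α i)) P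
      = fun j => (starRingEnd ℂ) (Matrix.vecMul α Q j) := by
    intro α; funext j
    simp only [Matrix.vecMul, dotProduct, map_sum, _root_.map_mul]
    refine Finset.sum_congr rfl fun i _ => ?_
    rw [hQe i j]; simp
  have hm1 : ∀ α, Matrix.vecMul α P = 0 → Matrix.vecMul (fun i => (starRingEnd ℂ) (α i)) Q = 0 := by
    intro α h; rw [key1]; funext j; simp [h]
  have hm2 : ∀ α, Matrix.vecMul α Q = 0 → Matrix.vecMul (fun i => (starRingEnd ℂ) (α i)) P = 0 := by
    intro α h; rw [key2]; funext j; simp [h]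
  let e : ↥(LinearMap.ker P.vecMulLinear) ≃ₗ[ℝ] ↥(LinearMap.ker Q.vecMulLinear) :=
    { toFun := fun x => ⟨fun i => (starRingEnd ℂ) (x.1 i),
        LinearMap.mem_ker.mpr (hm1 x.1 (LinearMap.mem_ker.mp x.2))⟩
      invFun := fun y => ⟨fun i => (starRingEnd ℂ) (y.1 i),
        LinearMap.mem_ker.mpr (hm2 y.1 (LinearMap.mem_ker.mp y.2))⟩
      left_inv := fun x => by ext i; simp
      right_inv := fun y => by ext i; simp
      map_add' := fun x y => by ext i; simp
      map_smul' := fun r x => by ext i; simp [Complex.real_smul] }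
  have hfact : ∀ S : Submodule ℂ (Fin 6 → ℂ),
      Module.finrank ℝ ↥S = 2 * Module.finrank ℂ ↥S := by
    intro S; rw [← Module.finrank_mul_finrank ℝ ℂ ↥S, Complex.finrank_real_complex]
  have hxy2 : Module.finrank ℝ ↥(LinearMap.ker P.vecMulLinear)
      = Module.finrank ℝ ↥(LinearMap.ker Q.vecMulLinear) := e.finrank_eq
  rw [hfact, hfact] at hxy2
  rw [← hker2] at hrn
  omega

lemma finrank_kerD (Dd : Fin 6 → Matrix (Fin 6) (Fin 6) ℝ)
    (hker : 4 ≤ Module.finrank ℝ (LinearMap.ker (dR Dd))) :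
    4 ≤ Module.finrank ℂ (LinearMap.ker (DmapC Dd)) := by
  obtain ⟨v, hv⟩ := exists_linearIndependent_of_le_finrank hker
  have hw : LinearIndependent ℝ (fun k => ((v k : Fin 6 → ℝ))) :=
    hv.map' (LinearMap.ker (dR Dd)).subtype (Submodule.ker_subtype _)
  set w : Fin 4 → (Fin 6 → ℝ) := fun k => (v k : Fin 6 → ℝ) with hwdef
  set cw : Fin 4 → (Fin 6 → ℂ) := fun k i => ((w k i : ℝ) : ℂ) with hcw
  have hindep : LinearIndependent ℂ cw := by
    rw [Fintype.linearIndependent_iff]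
    intro c hc k
    have h1 : ∀ i, ∑ l, c l * ((w l i : ℝ) : ℂ) = 0 := by
      intro i
      have := congrFun hc i
      simpa [Finset.sum_apply, Pi.smul_apply, smul_eq_mul, hcw] using this
    have hre0 : ∑ l, (c l).re • w l = 0 := by
      funext i
      have := congrArg Complex.re (h1 i)
      simpa [Complex.re_sum, Complex.mul_re, Finset.sum_apply, Pi.smul_apply,
        smul_eq_mul] using this
    have him0 : ∑ l, (c l).im • w l = 0 := by
      funext i
      have := congrArg Complex.im (h1 i)
      simpa [Complex.im_sum, Complex.mul_im, Finset.sum_apply, Pi.smul_apply,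
        smul_eq_mul] using this
    have hre := Fintype.linearIndependent_iff.mp hw (fun l => (c l).re) hre0 k
    have him := Fintype.linearIndependent_iff.mp hw (fun l => (c l).im) him0 k
    exact Complex.ext hre him
  have hmem : ∀ k, cw k ∈ LinearMap.ker (DmapC Dd) := by
    intro k
    have h0 : dR Dd (w k) = 0 := (v k).2
    rw [LinearMap.mem_ker]
    show dC Dd (cw k) = 0
    ext p q
    have hsum : ∑ r, w k r * Dd r p q = 0 := by
      have := congrFun (congrFun h0 p) q
      simpa [dR, LinearMap.sum_apply, LinearMap.smulRight_apply, LinearMap.proj_apply,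
        Matrix.sum_apply, Matrix.smul_apply, smul_eq_mul] using this
    simp only [dC, Matrix.sum_apply, Matrix.smul_apply, cplx, Matrix.map_apply,
      smul_eq_mul, Matrix.zero_apply, hcw]
    exact_mod_cast hsum
  have hle : Submodule.span ℂ (Set.range cw) ≤ LinearMap.ker (DmapC Dd) :=
    Submodule.span_le.mpr (Set.range_subset_iff.mpr hmem)
  calc (4:ℕ) = Module.finrank ℂ (Submodule.span ℂ (Set.range cw)) := by
        rw [finrank_span_eq_card hindep]; simp
    _ ≤ _ := Submodule.finrank_mono hle

/-- Let `g` be a `6`-dimensional real Lie algebra such that `ker d ∩ g*` has dimension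
at least `4`.  Then `g` admits no maximally non-integrable almost complex structure,
i.e. no almost complex structure `J` with `rk N_J = 3`. -/
theorem no_maximally_non_integrable_of_four_closed (Dd : Fin 6 → Matrix (Fin 6) (Fin 6) ℝ)
    (hanti : ∀ r, (Dd r)ᵀ = -(Dd r))
    (hJacobi : ∀ p q r s, ∑ t, ((Dd t) p q * (Dd s) t r + (Dd t) q r * (Dd s) t p +
      (Dd t) r p * (Dd s) t q) = 0)
    (hker : 4 ≤ Module.finrank ℝ (LinearMap.ker (dR Dd))) :
    ¬ ∃ J : Matrix (Fin 6) (Fin 6) ℝ, J * J = -1 ∧ nijRank Dd J = 3 := by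
  rintro ⟨J, hJ2, hrank⟩
  set W := LinearMap.ker (Matrix.vecMulLinear (P01 J)) with hW
  set KD := LinearMap.ker (DmapC Dd) with hKD
  have hWf : Module.finrank ℂ W = 3 := finrank_ker_P01 hJ2
  have hKDf : 4 ≤ Module.finrank ℂ KD := finrank_kerD Dd hker
  have hS : {ω : Matrix (Fin 6) (Fin 6) ℂ |
      ∃ α : Fin 6 → ℂ, Matrix.vecMul α (P01 J) = 0 ∧ ω = proj02 J (dC Dd α)}
      = ⇑(Lmap Dd J) '' (W : Set (Fin 6 → ℂ)) := by
    ext ω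
    constructor
    · rintro ⟨α, h1, rfl⟩
      exact ⟨α, LinearMap.mem_ker.mpr h1, rfl⟩
    · rintro ⟨α, hα, rfl⟩
      exact ⟨α, LinearMap.mem_ker.mp hα, rfl⟩
  have hnij : nijRank Dd J = Module.finrank ℂ (Submodule.map (Lmap Dd J) W) := by
    unfold nijRank
    rw [hS, Submodule.span_image, Submodule.span_eq]
  have hsup : Module.finrank ℂ ↥(W ⊔ KD) ≤ 6 := by
    have h := Submodule.finrank_le (W ⊔ KD)
    simpa using h
  have hinf : 1 ≤ Module.finrank ℂ ↥(W ⊓ KD) := by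
    have h := Submodule.finrank_sup_add_finrank_inf_eq W KD
    omega
  have : Nontrivial ↥(W ⊓ KD) := (Module.finrank_pos_iff (R := ℂ)).mp (by omega)
  obtain ⟨x, hx0⟩ := exists_ne (0 : ↥(W ⊓ KD))
  have hxW : (x : Fin 6 → ℂ) ∈ W := x.2.1
  have hxKD : (x : Fin 6 → ℂ) ∈ KD := x.2.2
  have hLx : Lmap Dd J (x : Fin 6 → ℂ) = 0 := by
    have hD : dC Dd (x : Fin 6 → ℂ) = 0 := LinearMap.mem_ker.mp hxKD
    show proj02 J (dC Dd (x : Fin 6 → ℂ)) = 0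
    rw [hD]
    simp [proj02]
  set L' := (Lmap Dd J).domRestrict W with hL'
  have hrn := LinearMap.finrank_range_add_finrank_ker L'
  rw [LinearMap.range_domRestrict] at hrn
  have hkerpos : 0 < Module.finrank ℂ (LinearMap.ker L') := by
    refine (Module.finrank_pos_iff (R := ℂ) (M := ↥(LinearMap.ker L'))).mpr (nontrivial_of_ne
      ⟨⟨(x : Fin 6 → ℂ), hxW⟩, ?_⟩ 0 ?_)
    · rw [LinearMap.mem_ker, hL', LinearMap.domRestrict_apply]
      exact hLx
    · intro h
      apply hx0
      have h2 : ((x : Fin 6 → ℂ)) = 0 :=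
        congrArg (fun z : ↥(LinearMap.ker L') => ((z : ↥W) : Fin 6 → ℂ)) h
      exact Subtype.ext h2
  rw [hnij] at hrank
  rw [hWf] at hrn
  omega
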